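/- Let K be a compact metric space that is connected and locally path-connected. Then for any continuous function f from a closed subset E of [0,1] into K, there exists a continuous extension of f to a continuous function from [0,1] into K. -/

import Mathlib

open Set Metric
open scoped ENNReal

/-- The infimum of the diameters of all paths between two points. -/
noncomputable def pathD {K : Type*} [MetricSpace K] (u v : K) : ℝ≥0∞ :=
  ⨅ p : Path u v, EMetric.diam (Set.range ⇑p)

/-- Uniform local path connectedness on a compact space: nearby points can be joined
by paths of small diameter. -/
lemma pathD_small {K : Type*} [MetricSpace K] [CompactSpace K] [LocallyPathConnectedSpace K]
    (ε : ℝ) (hε : 0 < ε) :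
    ∃ δ > 0, ∀ u v : K, dist u v < δ → pathD u v ≤ ENNReal.ofReal ε := by
  have hs : ∀ x : K, ∃ s : Set K, s ∈ nhds x ∧ IsPathConnected s ∧ s ⊆ ball x (ε/2) := by
    intro x
    rcases (path_connected_basis x).mem_iff.mp (ball_mem_nhds x (half_pos hε)) with
      ⟨s, ⟨hs1, hs2⟩, hs3⟩
    exact ⟨s, hs1, hs2, hs3⟩
  choose s hsn hsp hsb using hs
  obtain ⟨δ, hδpos, hδ⟩ := lebesgue_number_lemma_of_metric (isCompact_univ (X := K))
    (fun x => isOpen_interior) (fun x _ => Set.mem_iUnion.mpr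
      ⟨x, mem_interior_iff_mem_nhds.mpr (hsn x)⟩)
  refine ⟨δ, hδpos, fun u v huv => ?_⟩
  obtain ⟨i, hi⟩ := hδ u (mem_univ u)
  have hu : u ∈ s i := interior_subset (hi (mem_ball_self hδpos))
  have hv : v ∈ s i := interior_subset (hi (by rwa [mem_ball, dist_comm]))
  have hj : JoinedIn (s i) u v := (hsp i).joinedIn u hu v hv
  calc pathD u v ≤ EMetric.diam (Set.range ⇑hj.somePath) := iInf_le _ _
    _ ≤ EMetric.diam (s i) :=
        EMetric.diam_mono (range_subset_iff.mpr hj.somePath_mem)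
    _ ≤ EMetric.diam (ball i (ε/2)) := EMetric.diam_mono (hsb i)
    _ ≤ 2 * ENNReal.ofReal (ε/2) := by
        rw [← Metric.emetric_ball]; exact EMetric.diam_ball
    _ = ENNReal.ofReal ε := by
        rw [← ENNReal.ofReal_ofNat, ← ENNReal.ofReal_mul (by norm_num)]
        ring_nf

/-- Choice of a path between two points whose diameter is close to optimal. -/
lemma exists_path_diam {K : Type*} [MetricSpace K] [CompactSpace K] (u v : K)
    (hj : Joined u v) :
    ∃ p : Path u v, EMetric.diam (Set.range ⇑p) ≤ pathD u v + edist u v := by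
  by_cases h : u = v
  · subst h
    refine ⟨Path.refl u, ?_⟩
    rw [Path.refl_range]
    exact le_trans (EMetric.diam_subsingleton subsingleton_singleton).le zero_le
  · haveI : Nonempty (Path u v) := hj
    have hne : pathD u v ≠ ⊤ := by
      have h1 : pathD u v ≤ EMetric.diam (Set.range ⇑(Classical.arbitrary (Path u v))) :=
        iInf_le _ _
      have h2 : EMetric.diam (Set.range ⇑(Classical.arbitrary (Path u v))) ≤
          EMetric.diam (univ : Set K) := EMetric.diam_mono (subset_univ _)
      exact fun ht => (isCompact_univ (X := K)).isBounded.ediam_ne_top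
        (top_le_iff.mp (ht ▸ h1.trans h2))
    have hlt : pathD u v < pathD u v + edist u v :=
      ENNReal.lt_add_right hne ((edist_pos.2 h).ne')
    obtain ⟨p, hp⟩ := iInf_lt_iff.mp hlt
    exact ⟨p, hp.le⟩

/-- If `K` is a compact, connected, locally path-connected metric space, then every
continuous function from a closed subset `E` of `[0,1]` into `K` extends to a
continuous function from `[0,1]` into `K`. -/
theorem extension_from_closed_subset_of_unit_interval
    {K : Type*} [MetricSpace K] [CompactSpace K] [ConnectedSpace K]
    [LocallyPathConnectedSpace K]
    (E : Set ℝ) (hEsub : E ⊆ Set.Icc (0 : ℝ) 1) (hEclosed : IsClosed E)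
    (f : ℝ → K) (hf : ContinuousOn f E) :
    ∃ g : ℝ → K, ContinuousOn g (Set.Icc (0 : ℝ) 1) ∧ Set.EqOn g f E := by
  classical
  by_cases hE : E.Nonempty
  swap
  · exact ⟨fun _ => Classical.arbitrary K, continuousOn_const,
      fun x hx => absurd ⟨x, hx⟩ hE⟩
  haveI : PathConnectedSpace K := pathConnectedSpace_iff_connectedSpace.mpr inferInstance
  choose P hP using fun u v : K => exists_path_diam u v (PathConnectedSpace.joined u v)
  have hbddA : BddAbove E := ⟨1, fun x hx => (hEsub hx).2⟩
  have hbddB : BddBelow E := ⟨0, fun x hx => (hEsub hx).1⟩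
  set a := sInf E with ha_def
  set b := sSup E with hb_def
  have ha : a ∈ E := hEclosed.csInf_mem hE hbddB
  have hb : b ∈ E := hEclosed.csSup_mem hE hbddA
  have hab : a ≤ b := csInf_le_csSup hE hbddB hbddA
  set c : ℝ → ℝ := fun x => sSup (E ∩ Iic x) with hc_def
  set d : ℝ → ℝ := fun x => sInf (E ∩ Ici x) with hd_def
  have hbddc : ∀ x : ℝ, BddAbove (E ∩ Iic x) := fun x => ⟨x, fun y hy => hy.2⟩
  have hbddd : ∀ x : ℝ, BddBelow (E ∩ Ici x) := fun x => ⟨x, fun y hy => hy.2⟩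
  have hcmem : ∀ x : ℝ, a ≤ x → c x ∈ E ∩ Iic x := fun x hx =>
    (hEclosed.inter isClosed_Iic).csSup_mem ⟨a, ha, hx⟩ (hbddc x)
  have hdmem : ∀ x : ℝ, x ≤ b → d x ∈ E ∩ Ici x := fun x hx =>
    (hEclosed.inter isClosed_Ici).csInf_mem ⟨b, hb, hx⟩ (hbddd x)
  have hcge : ∀ x : ℝ, ∀ e ∈ E, e ≤ x → e ≤ c x := fun x e he hle =>
    le_csSup (hbddc x) ⟨he, hle⟩
  have hdle : ∀ x : ℝ, ∀ e ∈ E, x ≤ e → d x ≤ e := fun x e he hle =>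
    csInf_le (hbddd x) ⟨he, hle⟩
  set γ : ℝ → K := fun x =>
    if x ∈ E then f x else (P (f (c x)) (f (d x))).extend ((x - c x)/(d x - c x)) with hγ_def
  have hγE : ∀ x ∈ E, γ x = f x := by
    intro x hx
    simp only [hγ_def]
    rw [if_pos hx]
  -- the gap formula
  have hgap : ∀ c₀ d₀ : ℝ, c₀ ∈ E → d₀ ∈ E → E ∩ Ioo c₀ d₀ = ∅ →
      ∀ x ∈ Ioo c₀ d₀, γ x = (P (f c₀) (f d₀)).extend ((x - c₀)/(d₀ - c₀)) := by
    intro c₀ d₀ hc₀ hd₀ hemp x hx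
    have hxE : x ∉ E := fun h => (eq_empty_iff_forall_notMem.mp hemp x) ⟨h, hx⟩
    have hcx : c x = c₀ := by
      apply IsGreatest.csSup_eq
      refine ⟨⟨hc₀, hx.1.le⟩, fun e he => ?_⟩
      by_contra hlt
      push_neg at hlt
      exact (eq_empty_iff_forall_notMem.mp hemp e) ⟨he.1, hlt, lt_of_le_of_lt he.2 hx.2⟩
    have hdx : d x = d₀ := by
      apply IsLeast.csInf_eq
      refine ⟨⟨hd₀, hx.2.le⟩, fun e he => ?_⟩
      by_contra hlt
      push_neg at hlt
      exact (eq_empty_iff_forall_notMem.mp hemp e) ⟨he.1, lt_of_lt_of_le hx.1 he.2, hlt⟩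
    simp only [hγ_def]
    rw [if_neg hxE, hcx, hdx]
  have hγcont : ContinuousOn γ (Icc a b) := by
    intro x₀ hx₀
    by_cases hx₀E : x₀ ∈ E
    · -- the core metric estimate
      have core : ∀ ε : ℝ, 0 < ε → ∃ δ₁ > 0, ∀ x ∈ Icc a b,
          dist (c x) x₀ < δ₁ → dist (d x) x₀ < δ₁ → dist (γ x) (f x₀) < ε := by
        intro ε hε
        obtain ⟨δA, hδA, hA⟩ := pathD_small (K := K) (ε/8) (by positivity)
        set η := min (ε/8) (δA/2) with hη_def
        have hηpos : 0 < η := lt_min (by positivity) (by positivity)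
        have hη8 : η ≤ ε/8 := min_le_left _ _
        have hηA : η ≤ δA/2 := min_le_right _ _
        obtain ⟨δ₁, hδ₁, h₁⟩ := Metric.continuousWithinAt_iff.mp (hf x₀ hx₀E) η hηpos
        refine ⟨δ₁, hδ₁, fun x hx hcd hdd => ?_⟩
        by_cases hxE : x ∈ E
        · have hcx : c x = x :=
            IsGreatest.csSup_eq ⟨⟨hxE, le_refl x⟩, fun e he => he.2⟩
          rw [hγE x hxE]
          have hlt := h₁ hxE (by rwa [hcx] at hcd)
          linarith
        · have hc1 := hcmem x hx.1
          have hd1 := hdmem x hx.2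
          have hfc := h₁ hc1.1 hcd
          have hfd := h₁ hd1.1 hdd
          have hfcd : dist (f (c x)) (f (d x)) < 2 * η := by
            calc dist (f (c x)) (f (d x))
                ≤ dist (f (c x)) (f x₀) + dist (f x₀) (f (d x)) := dist_triangle _ _ _
              _ < η + η := by rw [dist_comm (f x₀)]; exact add_lt_add hfc hfd
              _ = 2 * η := by ring
          have hD := hA _ _ (by linarith : dist (f (c x)) (f (d x)) < δA)
          have hdiam : EMetric.diam (Set.range ⇑(P (f (c x)) (f (d x)))) ≤
              ENNReal.ofReal (ε/8 + ε/4) := by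
            refine le_trans (hP _ _) ?_
            rw [ENNReal.ofReal_add (by positivity) (by positivity)]
            refine add_le_add hD ?_
            rw [edist_dist]
            apply ENNReal.ofReal_le_ofReal
            linarith
          have hmem1 : γ x ∈ Set.range ⇑(P (f (c x)) (f (d x))) := by
            simp only [hγ_def]
            rw [if_neg hxE, ← Path.extend_range]
            exact Set.mem_range_self _
          have hmem2 : f (c x) ∈ Set.range ⇑(P (f (c x)) (f (d x))) :=
            ⟨0, (P (f (c x)) (f (d x))).source⟩
          have hedist := le_trans (EMetric.edist_le_diam_of_mem hmem1 hmem2) hdiam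
          rw [edist_dist] at hedist
          have hdist1 : dist (γ x) (f (c x)) ≤ ε/8 + ε/4 :=
            (ENNReal.ofReal_le_ofReal_iff (by positivity)).mp hedist
          calc dist (γ x) (f x₀)
              ≤ dist (γ x) (f (c x)) + dist (f (c x)) (f x₀) := dist_triangle _ _ _
            _ < (ε/8 + ε/4) + η := add_lt_add_of_le_of_lt hdist1 hfc
            _ < ε := by linarith
      have keyL : ContinuousWithinAt γ (Icc a x₀) x₀ := by
        rcases eq_or_lt_of_le hx₀.1 with heq | hlt
        · rw [← heq, Icc_self]; exact continuousWithinAt_singleton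
        · have hSne : (E ∩ Iio x₀).Nonempty := ⟨a, ha, hlt⟩
          have hSbdd : BddAbove (E ∩ Iio x₀) := ⟨x₀, fun y hy => hy.2.le⟩
          set l := sSup (E ∩ Iio x₀) with hl_def
          have hlE : l ∈ E := hEclosed.closure_subset
            (closure_mono inter_subset_left (csSup_mem_closure hSne hSbdd))
          have hlx₀ : l ≤ x₀ := csSup_le hSne fun y hy => hy.2.le
          rcases eq_or_lt_of_le hlx₀ with hacc | hgap'
          · -- x₀ is an accumulation point of E from the left
            rw [Metric.continuousWithinAt_iff]
            intro ε hε
            obtain ⟨δ₁, hδ₁, h₁⟩ := core ε hε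
            obtain ⟨e₁, he₁S, he₁gt⟩ := exists_lt_of_lt_csSup hSne
              (show x₀ - δ₁ < sSup (E ∩ Iio x₀) by rw [← hl_def, hacc]; linarith)
            have he₁x₀ : e₁ < x₀ := he₁S.2
            refine ⟨x₀ - e₁, sub_pos.mpr he₁x₀, fun x hx hdist => ?_⟩
            have he₁x : e₁ < x := by
              rw [Real.dist_eq, abs_lt] at hdist
              linarith [hdist.1]
            rw [hγE x₀ hx₀E]
            apply h₁ x ⟨hx.1, le_trans hx.2 hx₀.2⟩
            · have h1 : e₁ ≤ c x := hcge x e₁ he₁S.1 he₁x.le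
              have h2 : c x ≤ x := (hcmem x hx.1).2
              rw [Real.dist_eq, abs_lt]
              constructor <;> linarith [hx.2]
            · have h1 : x ≤ d x := (hdmem x (le_trans hx.2 hx₀.2)).2
              have h2 : d x ≤ x₀ := hdle x x₀ hx₀E hx.2
              rw [Real.dist_eq, abs_lt]
              constructor <;> linarith
          · -- (l, x₀) is a gap in E
            have hemp : E ∩ Ioo l x₀ = ∅ := by
              apply eq_empty_iff_forall_notMem.mpr
              rintro e ⟨heE, he1, he2⟩
              exact absurd (le_csSup hSbdd ⟨heE, he2⟩) (not_le.mpr he1)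
            have hcont : Continuous fun x : ℝ => (P (f l) (f x₀)).extend ((x - l)/(x₀ - l)) :=
              (P (f l) (f x₀)).continuous_extend.comp
                ((continuous_id.sub continuous_const).div_const _)
            apply ContinuousWithinAt.congr_of_eventuallyEq hcont.continuousWithinAt
            · have hmem : Ioc l x₀ ∈ nhdsWithin x₀ (Icc a x₀) :=
                mem_nhdsWithin.mpr ⟨Ioi l, isOpen_Ioi, hgap', fun y hy => ⟨hy.1, hy.2.2⟩⟩
              filter_upwards [hmem] with x hx
              rcases eq_or_lt_of_le hx.2 with heq | hltx
              · rw [heq, hγE x₀ hx₀E,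
                  show (x₀ - l)/(x₀ - l) = 1 from div_self (by linarith),
                  Path.extend_one]
              · exact hgap l x₀ hlE hx₀E hemp x ⟨hx.1, hltx⟩
            · rw [hγE x₀ hx₀E,
                show (x₀ - l)/(x₀ - l) = 1 from div_self (by linarith),
                Path.extend_one]
      have keyR : ContinuousWithinAt γ (Icc x₀ b) x₀ := by
        rcases eq_or_lt_of_le hx₀.2 with heq | hlt
        · rw [heq, Icc_self]; exact continuousWithinAt_singleton
        · have hSne : (E ∩ Ioi x₀).Nonempty := ⟨b, hb, hlt⟩
          have hSbdd : BddBelow (E ∩ Ioi x₀) := ⟨x₀, fun y hy => hy.2.le⟩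
          set r := sInf (E ∩ Ioi x₀) with hr_def
          have hrE : r ∈ E := hEclosed.closure_subset
            (closure_mono inter_subset_left (csInf_mem_closure hSne hSbdd))
          have hx₀r : x₀ ≤ r := le_csInf hSne fun y hy => hy.2.le
          rcases eq_or_lt_of_le hx₀r with hacc | hgap'
          · -- x₀ is an accumulation point of E from the right
            rw [Metric.continuousWithinAt_iff]
            intro ε hε
            obtain ⟨δ₁, hδ₁, h₁⟩ := core ε hε
            obtain ⟨e₁, he₁S, he₁lt⟩ := exists_lt_of_csInf_lt hSne
              (show sInf (E ∩ Ioi x₀) < x₀ + δ₁ by rw [← hr_def, ← hacc]; linarith)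
            have hx₀e₁ : x₀ < e₁ := he₁S.2
            refine ⟨e₁ - x₀, sub_pos.mpr hx₀e₁, fun x hx hdist => ?_⟩
            have hxe₁ : x < e₁ := by
              rw [Real.dist_eq, abs_lt] at hdist
              linarith [hdist.2]
            rw [hγE x₀ hx₀E]
            apply h₁ x ⟨le_trans hx₀.1 hx.1, hx.2⟩
            · have h1 : x₀ ≤ c x := hcge x x₀ hx₀E hx.1
              have h2 : c x ≤ x := (hcmem x (le_trans hx₀.1 hx.1)).2
              rw [Real.dist_eq, abs_lt]
              constructor <;> linarith
            · have h1 : x ≤ d x := (hdmem x hx.2).2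
              have h2 : d x ≤ e₁ := hdle x e₁ he₁S.1 hxe₁.le
              rw [Real.dist_eq, abs_lt]
              constructor <;> linarith [hx.1]
          · -- (x₀, r) is a gap in E
            have hemp : E ∩ Ioo x₀ r = ∅ := by
              apply eq_empty_iff_forall_notMem.mpr
              rintro e ⟨heE, he1, he2⟩
              exact absurd (csInf_le hSbdd ⟨heE, he1⟩) (not_le.mpr he2)
            have hcont : Continuous fun x : ℝ => (P (f x₀) (f r)).extend ((x - x₀)/(r - x₀)) :=
              (P (f x₀) (f r)).continuous_extend.comp
                ((continuous_id.sub continuous_const).div_const _)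
            apply ContinuousWithinAt.congr_of_eventuallyEq hcont.continuousWithinAt
            · have hmem : Ico x₀ r ∈ nhdsWithin x₀ (Icc x₀ b) :=
                mem_nhdsWithin.mpr ⟨Iio r, isOpen_Iio, hgap', fun y hy => ⟨hy.2.1, hy.1⟩⟩
              filter_upwards [hmem] with x hx
              rcases eq_or_lt_of_le hx.1 with heq | hltx
              · rw [← heq, hγE x₀ hx₀E,
                  show (x₀ - x₀)/(r - x₀) = 0 by rw [sub_self, zero_div],
                  Path.extend_zero]
              · exact hgap x₀ r hx₀E hrE hemp x ⟨hltx, hx.2⟩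
            · rw [hγE x₀ hx₀E,
                show (x₀ - x₀)/(r - x₀) = 0 by rw [sub_self, zero_div],
                Path.extend_zero]
      have := keyL.union keyR
      rwa [Icc_union_Icc_eq_Icc hx₀.1 hx₀.2] at this
    · -- x₀ lies in a gap of E
      have hc1 := hcmem x₀ hx₀.1
      have hd1 := hdmem x₀ hx₀.2
      have hclt : c x₀ < x₀ := lt_of_le_of_ne hc1.2 (fun h => hx₀E (h ▸ hc1.1))
      have hdlt : x₀ < d x₀ := lt_of_le_of_ne hd1.2 (fun h => hx₀E (by rw [h]; exact hd1.1))
      have hemp : E ∩ Ioo (c x₀) (d x₀) = ∅ := by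
        apply eq_empty_iff_forall_notMem.mpr
        rintro e ⟨heE, he1, he2⟩
        rcases le_or_gt e x₀ with h | h
        · exact absurd (hcge x₀ e heE h) (not_le.mpr he1)
        · exact absurd (hdle x₀ e heE h.le) (not_le.mpr he2)
      have hcont : Continuous fun x : ℝ =>
          (P (f (c x₀)) (f (d x₀))).extend ((x - c x₀)/(d x₀ - c x₀)) :=
        (P (f (c x₀)) (f (d x₀))).continuous_extend.comp
          ((continuous_id.sub continuous_const).div_const _)
      have hev : γ =ᶠ[nhds x₀]
          fun x => (P (f (c x₀)) (f (d x₀))).extend ((x - c x₀)/(d x₀ - c x₀)) := by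
        filter_upwards [isOpen_Ioo.mem_nhds (⟨hclt, hdlt⟩ : x₀ ∈ Ioo (c x₀) (d x₀))] with x hx
        exact hgap _ _ hc1.1 hd1.1 hemp x hx
      exact (hcont.continuousAt.congr hev.symm).continuousWithinAt
  refine ⟨fun x => γ (min (max x a) b), ?_, ?_⟩
  · have hmap : ∀ x : ℝ, min (max x a) b ∈ Icc a b := fun x =>
      ⟨le_min (le_max_right x a) hab, min_le_right _ _⟩
    exact hγcont.comp (((continuous_id.max continuous_const).min
      continuous_const).continuousOn) (fun x _ => hmap x)
  · intro x hx
    have h1 : a ≤ x := csInf_le hbddB hx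
    have h2 : x ≤ b := le_csSup hbddA hx
    show γ (min (max x a) b) = f x
    rw [max_eq_left h1, min_eq_left h2]
    exact hγE x hx
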